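/- Let M be a matroid on {x_1,...,x_n} and α = (k_1,...,k_n) ∈ ℕ^n with positive entries. Then M is a binary matroid if and only if M^α is a binary matroid, where a matroid is binary if for every pair of distinct circuits C_1, C_2, the symmetric difference C_1 △ C_2 contains a circuit. -/

import Mathlib

open Finset

/-- A set family is the collection of bases of a matroid: nonempty antichain
satisfying the basis exchange property. -/
def IsMatroidBases {γ : Type*} [DecidableEq γ] (ℬ : Set (Finset γ)) : Prop :=
  ℬ.Nonempty ∧
  (∀ B₁ ∈ ℬ, ∀ B₂ ∈ ℬ, B₁ ⊆ B₂ → B₁ = B₂) ∧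
  (∀ B₁ ∈ ℬ, ∀ B₂ ∈ ℬ, ∀ x ∈ B₁ \ B₂, ∃ y ∈ B₂ \ B₁, insert y (B₁.erase x) ∈ ℬ)

/-- The expansion of a family of subsets of `Fin n` with respect to `α`:
a subset `S` of the expanded ground set `Σ i, Fin (α i)` belongs to the
expansion iff it contains at most one copy of each element and its projection
belongs to the family. -/
def expansion {n : ℕ} (α : Fin n → ℕ) (𝒜 : Set (Finset (Fin n))) :
    Set (Finset (Σ i : Fin n, Fin (α i))) :=
  {S | S.image Sigma.fst ∈ 𝒜 ∧ S.card = (S.image Sigma.fst).card}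

/-- A set is dependent if it is contained in no basis. -/
def IsDependent {γ : Type*} [DecidableEq γ] (ℬ : Set (Finset γ)) (C : Finset γ) : Prop :=
  ¬ ∃ B ∈ ℬ, C ⊆ B

/-- A circuit is a minimal dependent set. -/
def IsCircuit {γ : Type*} [DecidableEq γ] (ℬ : Set (Finset γ)) (C : Finset γ) : Prop :=
  IsDependent ℬ C ∧ ∀ D ⊂ C, ¬ IsDependent ℬ D

/-- A matroid (given by its bases) is binary if the symmetric difference of any
two distinct circuits contains a circuit. -/
def IsBinary {γ : Type*} [DecidableEq γ] (ℬ : Set (Finset γ)) : Prop :=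
  ∀ C₁ C₂ : Finset γ, IsCircuit ℬ C₁ → IsCircuit ℬ C₂ → C₁ ≠ C₂ →
    ∃ C : Finset γ, IsCircuit ℬ C ∧ C ⊆ (C₁ \ C₂) ∪ (C₂ \ C₁)

theorem dep_contains_circuit {γ : Type*} [DecidableEq γ] {ℬ : Set (Finset γ)} :
    ∀ S : Finset γ, IsDependent ℬ S → ∃ C, C ⊆ S ∧ IsCircuit ℬ C := by
  intro S
  induction S using Finset.strongInduction with
  | _ S ih =>
    intro hS
    by_cases h : ∃ D, D ⊂ S ∧ IsDependent ℬ D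
    · obtain ⟨D, hDS, hD⟩ := h
      obtain ⟨C, hCD, hC⟩ := ih D hDS hD
      exact ⟨C, hCD.trans hDS.subset, hC⟩
    · push_neg at h
      exact ⟨S, subset_rfl, hS, h⟩

theorem circuit_eq_of_subset {γ : Type*} [DecidableEq γ] {ℬ : Set (Finset γ)}
    {C₁ C₂ : Finset γ} (h1 : IsCircuit ℬ C₁) (h2 : IsCircuit ℬ C₂) (hs : C₁ ⊆ C₂) :
    C₁ = C₂ := by
  by_contra hne
  exact h2.2 C₁ (hs.ssubset_of_ne hne) h1.1

section Exp
variable {n : ℕ} {α : Fin n → ℕ} {𝒜 : Set (Finset (Fin n))}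

theorem indep_iff (hα : ∀ i, 0 < α i) (S : Finset (Σ i : Fin n, Fin (α i))) :
    (∃ B' ∈ expansion α 𝒜, S ⊆ B') ↔
      Set.InjOn Sigma.fst (S : Set (Σ i : Fin n, Fin (α i))) ∧ ∃ B ∈ 𝒜, S.image Sigma.fst ⊆ B := by
  constructor
  · rintro ⟨B', ⟨hB1, hB2⟩, hSB⟩
    have hinj : Set.InjOn Sigma.fst (B' : Set (Σ i : Fin n, Fin (α i))) := Finset.card_image_iff.mp hB2.symm
    exact ⟨hinj.mono hSB, B'.image Sigma.fst, hB1, Finset.image_subset_image hSB⟩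
  · rintro ⟨hinj, B, hB, hSB⟩
    set T := (B \ S.image Sigma.fst).image (fun i => (⟨i, ⟨0, hα i⟩⟩ : Σ i : Fin n, Fin (α i))) with hT
    have hprT : T.image Sigma.fst = B \ S.image Sigma.fst := by
      rw [hT, Finset.image_image]
      exact Finset.image_id
    have hdisj : Disjoint S T := by
      rw [Finset.disjoint_left]
      intro a haS haT
      have : a.1 ∈ T.image Sigma.fst := Finset.mem_image_of_mem _ haT
      rw [hprT, Finset.mem_sdiff] at this
      exact this.2 (Finset.mem_image_of_mem _ haS)
    have hpr : (S ∪ T).image Sigma.fst = B := by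
      rw [Finset.image_union, hprT, Finset.union_sdiff_of_subset hSB]
    have hcardT : T.card = (B \ S.image Sigma.fst).card := by
      rw [hT]
      apply Finset.card_image_of_injective
      intro i j hij
      exact congrArg Sigma.fst hij
    have hcard : (S ∪ T).card = B.card := by
      rw [Finset.card_union_of_disjoint hdisj, hcardT,
        ← Finset.card_image_iff.mpr hinj, Finset.card_sdiff_of_subset hSB]
      have := Finset.card_le_card hSB
      omega
    exact ⟨S ∪ T, ⟨by rw [hpr]; exact hB, by rw [hpr, hcard]⟩, Finset.subset_union_left⟩

theorem dep_iff (hα : ∀ i, 0 < α i) (S : Finset (Σ i : Fin n, Fin (α i))) :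
    IsDependent (expansion α 𝒜) S ↔
      ¬ Set.InjOn Sigma.fst (S : Set (Σ i : Fin n, Fin (α i))) ∨ IsDependent 𝒜 (S.image Sigma.fst) := by
  rw [IsDependent, indep_iff hα, not_and_or]
  rfl

theorem pair_dep (hα : ∀ i, 0 < α i) {z w : Σ i : Fin n, Fin (α i)}
    (hzw : z ≠ w) (hfst : z.1 = w.1) : IsDependent (expansion α 𝒜) {z, w} := by
  rw [dep_iff hα]
  left
  intro hinj
  exact hzw (hinj (by simp) (by simp) hfst)

theorem proj_dep (hα : ∀ i, 0 < α i) {S : Finset (Σ i : Fin n, Fin (α i))}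
    (h : IsDependent 𝒜 (S.image Sigma.fst)) : IsDependent (expansion α 𝒜) S :=
  (dep_iff hα S).mpr (Or.inr h)

end Exp

section Exp2
variable {n : ℕ} {α : Fin n → ℕ} {𝒜 : Set (Finset (Fin n))}

theorem card_proj {S : Finset (Σ i : Fin n, Fin (α i))}
    (h : Set.InjOn Sigma.fst (S : Set (Σ i : Fin n, Fin (α i)))) :
    (S.image Sigma.fst).card = S.card :=
  Finset.card_image_iff.mpr h

/-- An injective lift of a circuit is a circuit of the expansion. -/
theorem lift_circuit (hα : ∀ i, 0 < α i) {C : Finset (Σ i : Fin n, Fin (α i))}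
    (hinj : Set.InjOn Sigma.fst (C : Set (Σ i : Fin n, Fin (α i))))
    (hc : IsCircuit 𝒜 (C.image Sigma.fst)) : IsCircuit (expansion α 𝒜) C := by
  constructor
  · exact proj_dep hα hc.1
  · intro D hD
    rw [dep_iff hα, not_or, not_not]
    have hinjD : Set.InjOn Sigma.fst (D : Set (Σ i : Fin n, Fin (α i))) :=
      hinj.mono hD.subset
    have hsub : D.image Sigma.fst ⊂ C.image Sigma.fst := by
      refine (Finset.image_subset_image hD.subset).ssubset_of_ne ?_
      intro heq
      have : D.card = C.card := by
        rw [← card_proj hinjD, ← card_proj hinj, heq]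
      exact hD.ne (Finset.eq_of_subset_of_card_le hD.subset this.ge)
    have := hc.2 _ hsub
    exact ⟨hinjD, this⟩

/-- Every circuit of the expansion is a parallel pair or an injective lift of a circuit. -/
theorem circuit_cases (hα : ∀ i, 0 < α i) {C : Finset (Σ i : Fin n, Fin (α i))}
    (h : IsCircuit (expansion α 𝒜) C) :
    (∃ z w : Σ i : Fin n, Fin (α i), z ≠ w ∧ z.1 = w.1 ∧ C = {z, w}) ∨
      (Set.InjOn Sigma.fst (C : Set (Σ i : Fin n, Fin (α i))) ∧
        IsCircuit 𝒜 (C.image Sigma.fst)) := by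
  by_cases hinj : Set.InjOn Sigma.fst (C : Set (Σ i : Fin n, Fin (α i)))
  · right
    refine ⟨hinj, ?_, ?_⟩
    · rcases (dep_iff hα C).mp h.1 with h' | h'
      · exact absurd hinj h'
      · exact h'
    · intro D hD
      rw [IsDependent, not_not]
      set C' := C.filter (fun x => x.1 ∈ D) with hC'
      have hC'sub : C' ⊆ C := Finset.filter_subset _ _
      have hprC' : C'.image Sigma.fst = D := by
        apply Finset.Subset.antisymm
        · intro i hi
          obtain ⟨x, hx, rfl⟩ := Finset.mem_image.mp hi
          exact (Finset.mem_filter.mp hx).2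
        · intro i hi
          obtain ⟨x, hx, rfl⟩ := Finset.mem_image.mp (hD.subset hi)
          exact Finset.mem_image_of_mem _ (Finset.mem_filter.mpr ⟨hx, hi⟩)
      have hC'ss : C' ⊂ C := by
        refine hC'sub.ssubset_of_ne ?_
        intro heq
        have : D.card < C.card := by
          rw [← card_proj hinj]
          exact Finset.card_lt_card hD
        have h2 : C'.card = D.card := by rw [← hprC', card_proj (hinj.mono hC'sub)]
        rw [heq] at h2
        omega
      have := h.2 C' hC'ss
      rw [dep_iff hα, not_or, not_not] at this
      obtain ⟨-, hnd⟩ := this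
      rw [IsDependent, not_not] at hnd
      obtain ⟨B, hB, hBsub⟩ := hnd
      rw [hprC'] at hBsub
      exact ⟨B, hB, hBsub⟩
  · left
    rw [Set.InjOn] at hinj
    push_neg at hinj
    obtain ⟨z, hz, w, hw, hfst, hzw⟩ := hinj
    have hzw' : z ≠ w := hzw
    have hdep : IsDependent (expansion α 𝒜) {z, w} := pair_dep hα hzw' hfst
    have hsub : ({z, w} : Finset _) ⊆ C := by
      intro a ha
      rcases Finset.mem_insert.mp ha with rfl | ha
      · exact hz
      · rw [Finset.mem_singleton] at ha; subst ha; exact hw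
    refine ⟨z, w, hzw', hfst, ?_⟩
    by_contra hne
    exact h.2 _ (hsub.ssubset_of_ne (fun e => hne e.symm)) hdep
end Exp2

section Main
variable {n : ℕ} {α : Fin n → ℕ} {𝒜 : Set (Finset (Fin n))}

/-- Pair vs. anything: a dependent subset of the symmetric difference, when the
shared element of the pair lies in `C₂`. -/
theorem pair_lift_aux (hα : ∀ i, 0 < α i) {z w : Σ i : Fin n, Fin (α i)}
    {C₂ : Finset (Σ i : Fin n, Fin (α i))} (hz2 : z ∈ C₂) (hzw : z ≠ w) (hfst : z.1 = w.1)
    (hinj2 : Set.InjOn Sigma.fst (C₂ : Set (Σ i : Fin n, Fin (α i))))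
    (hc2 : IsCircuit 𝒜 (C₂.image Sigma.fst)) :
    ∃ S, S ⊆ (({z, w} : Finset _) \ C₂) ∪ (C₂ \ ({z, w} : Finset _)) ∧
      IsDependent (expansion α 𝒜) S := by
  have hw2 : w ∉ C₂ := fun hw => hzw (hinj2 hz2 hw hfst)
  refine ⟨insert w (C₂.erase z), ?_, ?_⟩
  · intro a ha
    rcases Finset.mem_insert.mp ha with rfl | ha
    · exact Finset.mem_union_left _ (Finset.mem_sdiff.mpr ⟨by simp, hw2⟩)
    · have haC2 := Finset.mem_of_mem_erase ha
      have hanez := Finset.ne_of_mem_erase ha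
      refine Finset.mem_union_right _ (Finset.mem_sdiff.mpr ⟨haC2, ?_⟩)
      intro hmem
      rcases Finset.mem_insert.mp hmem with rfl | hmem
      · exact hanez rfl
      · rw [Finset.mem_singleton] at hmem
        subst hmem
        exact hw2 haC2
  · apply proj_dep hα
    have heq : (insert w (C₂.erase z)).image Sigma.fst = C₂.image Sigma.fst := by
      apply Finset.Subset.antisymm
      · intro i hi
        obtain ⟨x, hx, rfl⟩ := Finset.mem_image.mp hi
        rcases Finset.mem_insert.mp hx with rfl | hx
        · exact hfst ▸ Finset.mem_image_of_mem _ hz2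
        · exact Finset.mem_image_of_mem _ (Finset.mem_of_mem_erase hx)
      · intro i hi
        obtain ⟨x, hx, rfl⟩ := Finset.mem_image.mp hi
        by_cases hxz : x = z
        · subst hxz
          rw [hfst]
          exact Finset.mem_image_of_mem _ (Finset.mem_insert_self _ _)
        · exact Finset.mem_image_of_mem _
            (Finset.mem_insert_of_mem (Finset.mem_erase.mpr ⟨hxz, hx⟩))
    rw [heq]
    exact hc2.1

/-- Pair vs. any circuit: the symmetric difference contains a dependent set. -/
theorem pair_any (hα : ∀ i, 0 < α i) {C₁ C₂ : Finset (Σ i : Fin n, Fin (α i))}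
    (h1 : IsCircuit (expansion α 𝒜) C₁) (h2 : IsCircuit (expansion α 𝒜) C₂)
    (hne : C₁ ≠ C₂)
    (hp : ∃ z w : Σ i : Fin n, Fin (α i), z ≠ w ∧ z.1 = w.1 ∧ C₁ = {z, w}) :
    ∃ S, S ⊆ (C₁ \ C₂) ∪ (C₂ \ C₁) ∧ IsDependent (expansion α 𝒜) S := by
  obtain ⟨z, w, hzw, hfst, hC1⟩ := hp
  have hd1 : (C₁ \ C₂).Nonempty := by
    rw [Finset.sdiff_nonempty]
    exact fun hsub => hne (circuit_eq_of_subset h1 h2 hsub)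
  have hd2 : (C₂ \ C₁).Nonempty := by
    rw [Finset.sdiff_nonempty]
    exact fun hsub => hne.symm (circuit_eq_of_subset h2 h1 hsub)
  by_cases hint : (C₁ ∩ C₂).Nonempty
  · obtain ⟨s, hs⟩ := hint
    rw [Finset.mem_inter] at hs
    obtain ⟨hs1, hs2⟩ := hs
    have hfstC1 : ∀ a ∈ C₁, a.1 = z.1 := by
      intro a ha
      rw [hC1] at ha
      rcases Finset.mem_insert.mp ha with rfl | ha
      · rfl
      · rw [Finset.mem_singleton] at ha
        subst ha
        exact hfst.symm
    rcases circuit_cases hα h2 with ⟨z', w', hzw', hfst', hC2⟩ | ⟨hinj2, hc2⟩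
    · -- pair vs pair, sharing an element
      have hfstC2 : ∀ a ∈ C₂, a.1 = z'.1 := by
        intro a ha
        rw [hC2] at ha
        rcases Finset.mem_insert.mp ha with rfl | ha
        · rfl
        · rw [Finset.mem_singleton] at ha
          subst ha
          exact hfst'.symm
      obtain ⟨u, hu⟩ := hd1
      obtain ⟨v, hv⟩ := hd2
      have huC1 := (Finset.mem_sdiff.mp hu).1
      have hvC2 := (Finset.mem_sdiff.mp hv).1
      have huv : u ≠ v := by
        intro h
        subst h
        exact (Finset.mem_sdiff.mp hu).2 hvC2
      have hfuv : u.1 = v.1 := by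
        rw [hfstC1 u huC1, hfstC2 v hvC2, ← hfstC1 s hs1, ← hfstC2 s hs2]
      refine ⟨{u, v}, ?_, pair_dep hα huv hfuv⟩
      intro a ha
      rcases Finset.mem_insert.mp ha with rfl | ha
      · exact Finset.mem_union_left _ hu
      · rw [Finset.mem_singleton] at ha
        subst ha
        exact Finset.mem_union_right _ hv
    · -- pair vs injective lift, sharing an element
      rw [hC1] at hs1 ⊢
      rcases Finset.mem_insert.mp hs1 with rfl | hs1
      · exact pair_lift_aux hα hs2 hzw hfst hinj2 hc2
      · rw [Finset.mem_singleton] at hs1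
        subst hs1
        rw [Finset.pair_comm z s]
        exact pair_lift_aux hα hs2 (fun h => hzw h.symm) hfst.symm hinj2 hc2
  · -- disjoint: C₁ itself works
    refine ⟨C₁, ?_, h1.1⟩
    intro a ha
    apply Finset.mem_union_left
    rw [Finset.mem_sdiff]
    exact ⟨ha, fun h2a => hint ⟨a, Finset.mem_inter.mpr ⟨ha, h2a⟩⟩⟩

end Main

/-- `M` is binary iff its expansion `M^α` is binary. -/
theorem stmt_2 {n : ℕ} (α : Fin n → ℕ) (hα : ∀ i, 0 < α i)
    (𝒜 : Set (Finset (Fin n))) (hM : IsMatroidBases 𝒜) :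
    IsBinary 𝒜 ↔ IsBinary (expansion α 𝒜) := by
  constructor
  · -- M binary → expansion binary
    intro hbin C₁ C₂ h1 h2 hne
    suffices hs : ∃ S, S ⊆ (C₁ \ C₂) ∪ (C₂ \ C₁) ∧ IsDependent (expansion α 𝒜) S by
      obtain ⟨S, hS, hdep⟩ := hs
      obtain ⟨C, hCS, hC⟩ := dep_contains_circuit S hdep
      exact ⟨C, hC, hCS.trans hS⟩
    rcases circuit_cases hα h1 with hp1 | ⟨hinj1, hc1⟩
    · exact pair_any hα h1 h2 hne hp1
    rcases circuit_cases hα h2 with hp2 | ⟨hinj2, hc2⟩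
    · obtain ⟨S, hS, hdep⟩ := pair_any hα h2 h1 hne.symm hp2
      exact ⟨S, by rwa [Finset.union_comm] at hS, hdep⟩
    -- both injective lifts of circuits
    have hd1 : (C₁ \ C₂).Nonempty := by
      rw [Finset.sdiff_nonempty]
      exact fun hsub => hne (circuit_eq_of_subset h1 h2 hsub)
    by_cases hproj : C₁.image Sigma.fst = C₂.image Sigma.fst
    · obtain ⟨z, hz⟩ := hd1
      rw [Finset.mem_sdiff] at hz
      obtain ⟨hz1, hz2⟩ := hz
      have : z.1 ∈ C₂.image Sigma.fst := hproj ▸ Finset.mem_image_of_mem _ hz1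
      obtain ⟨w, hw2, hwz⟩ := Finset.mem_image.mp this
      have hzw : z ≠ w := fun h => hz2 (h ▸ hw2)
      have hw1 : w ∉ C₁ := by
        intro hw1
        exact hzw (hinj1 hz1 hw1 hwz.symm)
      refine ⟨{z, w}, ?_, pair_dep hα hzw hwz.symm⟩
      intro a ha
      rcases Finset.mem_insert.mp ha with rfl | ha
      · exact Finset.mem_union_left _ (Finset.mem_sdiff.mpr ⟨hz1, hz2⟩)
      · rw [Finset.mem_singleton] at ha
        subst ha
        exact Finset.mem_union_right _ (Finset.mem_sdiff.mpr ⟨hw2, hw1⟩)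
    · obtain ⟨D, hDc, hDsub⟩ := hbin _ _ hc1 hc2 hproj
      refine ⟨C₁.filter (fun x => x.1 ∈ D) ∪ C₂.filter (fun x => x.1 ∈ D), ?_, ?_⟩
      · intro a ha
        rcases Finset.mem_union.mp ha with ha | ha
        · obtain ⟨ha1, haD⟩ := Finset.mem_filter.mp ha
          rcases Finset.mem_union.mp (hDsub haD) with h' | h'
          · refine Finset.mem_union_left _ (Finset.mem_sdiff.mpr ⟨ha1, ?_⟩)
            intro ha2
            exact (Finset.mem_sdiff.mp h').2 (Finset.mem_image_of_mem _ ha2)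
          · exact absurd (Finset.mem_image_of_mem Sigma.fst ha1) (Finset.mem_sdiff.mp h').2
        · obtain ⟨ha2, haD⟩ := Finset.mem_filter.mp ha
          rcases Finset.mem_union.mp (hDsub haD) with h' | h'
          · exact absurd (Finset.mem_image_of_mem Sigma.fst ha2) (Finset.mem_sdiff.mp h').2
          · refine Finset.mem_union_right _ (Finset.mem_sdiff.mpr ⟨ha2, ?_⟩)
            intro ha1
            exact (Finset.mem_sdiff.mp h').2 (Finset.mem_image_of_mem _ ha1)
      · apply proj_dep hα
        have heq : (C₁.filter (fun x => x.1 ∈ D) ∪ C₂.filter (fun x => x.1 ∈ D)).image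
            Sigma.fst = D := by
          apply Finset.Subset.antisymm
          · intro i hi
            obtain ⟨x, hx, rfl⟩ := Finset.mem_image.mp hi
            rcases Finset.mem_union.mp hx with hx | hx
            · exact (Finset.mem_filter.mp hx).2
            · exact (Finset.mem_filter.mp hx).2
          · intro i hi
            rcases Finset.mem_union.mp (hDsub hi) with h' | h'
            · obtain ⟨x, hx, rfl⟩ := Finset.mem_image.mp (Finset.mem_sdiff.mp h').1
              exact Finset.mem_image_of_mem _
                (Finset.mem_union_left _ (Finset.mem_filter.mpr ⟨hx, hi⟩))
            · obtain ⟨x, hx, rfl⟩ := Finset.mem_image.mp (Finset.mem_sdiff.mp h').1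
              exact Finset.mem_image_of_mem _
                (Finset.mem_union_right _ (Finset.mem_filter.mpr ⟨hx, hi⟩))
        rw [heq]
        exact hDc.1
  · -- expansion binary → M binary
    intro hbin D₁ D₂ h1 h2 hne
    set ℓ : Fin n → (Σ i : Fin n, Fin (α i)) := fun i => ⟨i, ⟨0, hα i⟩⟩ with hℓ
    have key : ∀ D : Finset (Fin n), (D.image ℓ).image Sigma.fst = D := by
      intro D
      rw [Finset.image_image]
      exact Finset.image_id
    have hinjD : ∀ D : Finset (Fin n),
        Set.InjOn Sigma.fst ((D.image ℓ : Finset (Σ i : Fin n, Fin (α i))) :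
          Set (Σ i : Fin n, Fin (α i))) := by
      intro D x hx y hy hxy
      rw [Finset.coe_image] at hx hy
      obtain ⟨i, -, rfl⟩ := hx
      obtain ⟨j, -, rfl⟩ := hy
      exact congrArg ℓ hxy
    have hc1 : IsCircuit (expansion α 𝒜) (D₁.image ℓ) :=
      lift_circuit hα (hinjD D₁) (by rw [key]; exact h1)
    have hc2 : IsCircuit (expansion α 𝒜) (D₂.image ℓ) :=
      lift_circuit hα (hinjD D₂) (by rw [key]; exact h2)
    have hne' : D₁.image ℓ ≠ D₂.image ℓ := by
      intro h
      apply hne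
      rw [← key D₁, ← key D₂, h]
    obtain ⟨C, hC, hCsub⟩ := hbin _ _ hc1 hc2 hne'
    have hCproj : C.image Sigma.fst ⊆ (D₁ \ D₂) ∪ (D₂ \ D₁) := by
      intro i hi
      obtain ⟨x, hx, rfl⟩ := Finset.mem_image.mp hi
      rcases Finset.mem_union.mp (hCsub hx) with hx' | hx'
      · obtain ⟨hx1, hx2⟩ := Finset.mem_sdiff.mp hx'
        obtain ⟨i', hi', rfl⟩ := Finset.mem_image.mp hx1
        refine Finset.mem_union_left _ (Finset.mem_sdiff.mpr ⟨hi', ?_⟩)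
        intro hmem
        exact hx2 (Finset.mem_image_of_mem ℓ hmem)
      · obtain ⟨hx1, hx2⟩ := Finset.mem_sdiff.mp hx'
        obtain ⟨i', hi', rfl⟩ := Finset.mem_image.mp hx1
        refine Finset.mem_union_right _ (Finset.mem_sdiff.mpr ⟨hi', ?_⟩)
        intro hmem
        exact hx2 (Finset.mem_image_of_mem ℓ hmem)
    have hCinj : Set.InjOn Sigma.fst (C : Set (Σ i : Fin n, Fin (α i))) := by
      have hsubU : C ⊆ D₁.image ℓ ∪ D₂.image ℓ := by
        intro a ha
        rcases Finset.mem_union.mp (hCsub ha) with h' | h'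
        · exact Finset.mem_union_left _ (Finset.mem_sdiff.mp h').1
        · exact Finset.mem_union_right _ (Finset.mem_sdiff.mp h').1
      intro x hx y hy hxy
      have hx' : ∃ i, x = ℓ i := by
        rcases Finset.mem_union.mp (hsubU hx) with h' | h' <;>
          · obtain ⟨i, -, rfl⟩ := Finset.mem_image.mp h'
            exact ⟨i, rfl⟩
      have hy' : ∃ i, y = ℓ i := by
        rcases Finset.mem_union.mp (hsubU hy) with h' | h' <;>
          · obtain ⟨i, -, rfl⟩ := Finset.mem_image.mp h'
            exact ⟨i, rfl⟩
      obtain ⟨i, rfl⟩ := hx'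
      obtain ⟨j, rfl⟩ := hy'
      exact congrArg ℓ hxy
    rcases (dep_iff hα C).mp hC.1 with h' | h'
    · exact absurd hCinj h'
    · obtain ⟨D, hDsub', hDc⟩ := dep_contains_circuit _ h'
      exact ⟨D, hDc, hDsub'.trans hCproj⟩
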